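/- If L is a (finite) Kuratowski linear ordering, then the cardinality of L equals the cardinality of its field ⋃L. -/

import Mathlib

/-- `L` is a Kuratowski linear ordering: a finite family of sets such that
(i) `∅ ∉ L`; (ii) if `L` is nonempty it contains a singleton; (iii) every
member is either the union `⋃₀ L` or extends to another member by one point
of `⋃₀ L`; (iv) any two members are comparable under inclusion. -/
def IsKuratowskiLO {α : Type*} (L : Set (Set α)) : Prop :=
  L.Finite ∧
  ∅ ∉ L ∧
  (L.Nonempty → ∃ a : α, {a} ∈ L) ∧
  (∀ x ∈ L, x = ⋃₀ L ∨ ∃ y ∈ ⋃₀ L, y ∉ x ∧ x ∪ {y} ∈ L) ∧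
  (∀ x ∈ L, ∀ y ∈ L, x ⊆ y ∨ y ⊆ x)

lemma klo_sUnion_mem {α : Type*} {L : Set (Set α)} (h : IsKuratowskiLO L)
    (hne : L.Nonempty) : ⋃₀ L ∈ L := by
  obtain ⟨hfin, -, -, h3, h4⟩ := h
  obtain ⟨x, hx, hmax⟩ : ∃ x ∈ L, ∀ z ∈ L, id x ≤ id z → id x = id z := by
    obtain ⟨x, hx, hm⟩ := Set.Finite.exists_maximalFor id L hfin hne
    exact ⟨x, hx, fun z hz h => le_antisymm h (hm hz h)⟩
  have hxmax : ∀ z ∈ L, z ⊆ x := by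
    intro z hz
    rcases h4 x hx z hz with h | h
    · exact (hmax z hz h).ge
    · exact h
  have hx' : x = ⋃₀ L := by
    rcases h3 x hx with h | ⟨y, _, hyx, hxy⟩
    · exact h
    · exact absurd (hxmax _ hxy (Or.inr rfl)) hyx
  rwa [← hx']

lemma klo_aux {α : Type*} : ∀ (n : ℕ) (L : Set (Set α)), IsKuratowskiLO L →
    L.ncard = n → (⋃₀ L).Finite ∧ L.ncard = (⋃₀ L).ncard := by
  intro n
  induction n with
  | zero =>
    intro L hL hc
    have hLe : L = ∅ := (Set.ncard_eq_zero hL.1).mp hc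
    subst hLe
    simp
  | succ n ih =>
    intro L hL hc
    have hfin := hL.1
    have hne : L.Nonempty := Set.nonempty_of_ncard_ne_zero (by omega)
    have hM : ⋃₀ L ∈ L := klo_sUnion_mem hL hne
    set M := ⋃₀ L with hMdef
    set L' := L \ {M} with hL'def
    have hfinL' : L'.Finite := hfin.subset Set.diff_subset
    have hcard' : L'.ncard = n := by
      have := Set.ncard_diff_singleton_add_one hM hfin
      rw [← hL'def] at this
      omega
    have hsubM : ∀ z ∈ L, z ⊆ M := fun z hz => Set.subset_sUnion_of_mem hz
    have hKLO' : IsKuratowskiLO L' := by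
      refine ⟨hfinL', fun h => hL.2.1 h.1, ?_, ?_, fun x hx y hy => hL.2.2.2.2 x hx.1 y hy.1⟩
      · intro hne'
        obtain ⟨a, ha⟩ := hL.2.2.1 hne
        refine ⟨a, ha, ?_⟩
        intro haM
        obtain ⟨z, hz⟩ := hne'
        have hzne : z ≠ ∅ := fun h => hL.2.1 (h ▸ hz.1)
        have hzM : z ⊆ M := hsubM z hz.1
        rw [Set.mem_singleton_iff] at haM
        rw [← haM] at hzM
        have : z = {a} := (Set.Nonempty.subset_singleton_iff
          (Set.nonempty_iff_ne_empty.mpr hzne)).mp hzM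
        exact hz.2 (by rw [Set.mem_singleton_iff, this, haM])
      · intro x hx
        have hxM : x ≠ M := hx.2
        rcases hL.2.2.2.1 x hx.1 with h | ⟨y, hyU, hyx, hxy⟩
        · exact absurd h hxM
        by_cases hxyM : x ∪ {y} = M
        · left
          apply subset_antisymm (Set.subset_sUnion_of_mem hx)
          apply Set.sUnion_subset
          intro z hz
          rcases hL.2.2.2.2 z hz.1 x hx.1 with h | h
          · exact h
          · have hzM : z ⊆ x ∪ {y} := hxyM ▸ hsubM z hz.1
            have hyz : y ∉ z := by
              intro hyz
              apply hz.2
              rw [Set.mem_singleton_iff, ← hxyM]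
              exact subset_antisymm hzM (Set.union_subset h (by simpa using hyz))
            intro t ht
            rcases hzM ht with h' | h'
            · exact h'
            · exact absurd (h' ▸ ht) hyz
        · right
          exact ⟨y, ⟨x ∪ {y}, ⟨hxy, hxyM⟩, Or.inr rfl⟩, hyx, ⟨hxy, hxyM⟩⟩
    by_cases hne' : L'.Nonempty
    · obtain ⟨hfin', heq'⟩ := ih L' hKLO' hcard'
      have hM' : ⋃₀ L' ∈ L' := klo_sUnion_mem hKLO' hne'
      set M' := ⋃₀ L' with hM'def
      have hM'M : M' ≠ M := hM'.2
      rcases hL.2.2.2.1 M' hM'.1 with h | ⟨y, hyU, hyM', hins⟩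
      · exact absurd h hM'M
      have hMeq : M = M' ∪ {y} := by
        by_contra hc'
        have : M' ∪ {y} ∈ L' := ⟨hins, fun h => hc' (Set.mem_singleton_iff.mp h).symm⟩
        have : M' ∪ {y} ⊆ M' := Set.subset_sUnion_of_mem this
        exact hyM' (this (Or.inr rfl))
      have hMfin : M.Finite := by rw [hMeq, Set.union_singleton]; exact hfin'.insert y
      refine ⟨hMfin, ?_⟩
      have h1 : M.ncard = M'.ncard + 1 := by
        rw [hMeq, Set.union_singleton, Set.ncard_insert_of_notMem hyM' hfin']
      have h2 : L.ncard = L'.ncard + 1 := by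
        have := Set.ncard_diff_singleton_add_one hM hfin
        rw [← hL'def] at this
        omega
      omega
    · have hL'e : L' = ∅ := Set.not_nonempty_iff_eq_empty.mp hne'
      have hLM : L = {M} := by
        apply subset_antisymm
        · intro z hz
          by_contra hzM
          exact (hL'e ▸ (⟨hz, hzM⟩ : z ∈ L') : z ∈ (∅ : Set (Set α)))
        · simpa using hM
      obtain ⟨a, ha⟩ := hL.2.2.1 hne
      have haM : {a} = M := by rw [hLM] at ha; exact ha
      constructor
      · rw [← haM]; exact Set.finite_singleton a
      · rw [hLM, ← haM]; simp

/-- A Kuratowski linear ordering has the same cardinality as its field `⋃₀ L`. -/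
theorem kuratowskiLO_ncard_field {α : Type*} (L : Set (Set α))
    (hL : IsKuratowskiLO L) :
    L.ncard = (⋃₀ L).ncard :=
  (klo_aux L.ncard L hL rfl).2
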